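/- Let h : Ω → ℝ be locally measurable and suppose the multiplication operator f ↦ h·f is a band projection P on L_p(μ). Then the set Ω \ ([h = 0] ∪ [h = 1]) is a local null set, P is multiplication by the indicator of Ω₀ := [h = 1], and the band M = ran(P) equals {f ∈ L_p(μ) : f = 0 μ-a.e. on Ω \ Ω₀}. -/

import Mathlib

open MeasureTheory Set ENNReal

/-- A function `h : Ω → ℝ` is locally measurable if `1_A · h` is measurable for every
measurable set `A` of finite measure. -/
def LocallyMeasurableFun {Ω : Type*} [MeasurableSpace Ω] (μ : Measure Ω) (h : Ω → ℝ) : Prop :=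
  ∀ A : Set Ω, MeasurableSet A → μ A < ∞ → Measurable (A.indicator h)

/-- If `h` is locally measurable and multiplication by `h` is a band projection on
`L_p(μ)` (it maps `L_p` into itself, is idempotent a.e., and satisfies `0 ≤ P ≤ I`),
then `Ω \ ([h = 0] ∪ [h = 1])` is a local null set, `P` is multiplication by the
indicator of `Ω₀ := [h = 1]`, and the range of `P` is
`{f ∈ L_p(μ) : f = 0 μ-a.e. on Ω \ Ω₀}`. -/
theorem multiplication_band_projection {Ω : Type*} [MeasurableSpace Ω] (μ : Measure Ω)
    (p : ℝ≥0∞) (hp : 1 ≤ p) (hp' : p ≠ ∞)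
    (h : Ω → ℝ) (hloc : LocallyMeasurableFun μ h)
    (hmaps : ∀ f : Ω → ℝ, MemLp f p μ → MemLp (fun x => h x * f x) p μ)
    (hidem : ∀ f : Ω → ℝ, MemLp f p μ →
      (fun x => h x * (h x * f x)) =ᵐ[μ] fun x => h x * f x)
    (hord : ∀ f : Ω → ℝ, MemLp f p μ → (0 : Ω → ℝ) ≤ᵐ[μ] f →
      ((0 : Ω → ℝ) ≤ᵐ[μ] fun x => h x * f x) ∧ (fun x => h x * f x) ≤ᵐ[μ] f) :
    (∀ A : Set Ω, MeasurableSet A → μ A < ∞ →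
      μ ({x | h x ≠ 0 ∧ h x ≠ 1} ∩ A) = 0) ∧
    (∀ f : Ω → ℝ, MemLp f p μ →
      (fun x => h x * f x) =ᵐ[μ] ({x | h x = 1}).indicator f) ∧
    (∀ f : Ω → ℝ, MemLp f p μ →
      ((∃ g : Ω → ℝ, MemLp g p μ ∧ f =ᵐ[μ] fun x => h x * g x) ↔
        μ ({x | f x ≠ 0} ∩ {x | h x ≠ 1}) = 0)) := by
  have hp0 : p ≠ 0 := fun h0 => by simp [h0] at hp
  -- Part 1
  have key : ∀ A : Set Ω, MeasurableSet A → μ A < ∞ →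
      μ ({x | h x ≠ 0 ∧ h x ≠ 1} ∩ A) = 0 := by
    intro A hA hμA
    have hfA : MemLp (A.indicator fun _ => (1 : ℝ)) p μ :=
      memLp_indicator_const p hA 1 (Or.inr hμA.ne)
    have hnull := ae_iff.mp (hidem _ hfA)
    refine measure_mono_null ?_ hnull
    rintro x ⟨⟨h0, h1⟩, hxA⟩
    simp only [mem_setOf_eq, Set.indicator_of_mem hxA, mul_one]
    intro heq
    exact h1 (mul_left_cancel₀ h0 (by simpa using heq))
  -- Part 2
  have part2 : ∀ f : Ω → ℝ, MemLp f p μ →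
      (fun x => h x * f x) =ᵐ[μ] ({x | h x = 1}).indicator f := by
    intro f hf
    obtain ⟨f', hf'sm, hff'⟩ := hf.1
    have hf' : MemLp f' p μ := hf.ae_eq hff'
    have hSmeas : ∀ n : ℕ, MeasurableSet {x | ((n : NNReal) + 1)⁻¹ ≤ ‖f' x‖₊} := by
      intro n
      exact measurableSet_le measurable_const hf'sm.measurable.nnnorm
    have hSfin : ∀ n : ℕ, μ {x | ((n : NNReal) + 1)⁻¹ ≤ ‖f' x‖₊} < ∞ := by
      intro n
      exact hf'.meas_ge_lt_top hp0 hp' (by positivity)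
    have hNnull : μ ({x | h x ≠ 0 ∧ h x ≠ 1} ∩ {x | f' x ≠ 0}) = 0 := by
      have hsub : {x | h x ≠ 0 ∧ h x ≠ 1} ∩ {x | f' x ≠ 0} ⊆
          ⋃ n : ℕ, {x | h x ≠ 0 ∧ h x ≠ 1} ∩ {x | ((n : NNReal) + 1)⁻¹ ≤ ‖f' x‖₊} := by
        rintro x ⟨hx1, hx2⟩
        have hpos : (0 : ℝ) < ‖f' x‖ := norm_pos_iff.mpr hx2
        obtain ⟨n, hn⟩ := exists_nat_gt ‖f' x‖⁻¹
        refine mem_iUnion.mpr ⟨n, hx1, ?_⟩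
        simp only [mem_setOf_eq]
        rw [← NNReal.coe_le_coe]
        push_cast
        rw [inv_le_comm₀ (by positivity) hpos]
        calc ‖f' x‖⁻¹ ≤ n := hn.le
          _ ≤ n + 1 := by linarith
      refine measure_mono_null hsub (measure_iUnion_null fun n => key _ (hSmeas n) (hSfin n))
    have hN : ∀ᵐ x ∂μ, ¬((h x ≠ 0 ∧ h x ≠ 1) ∧ f' x ≠ 0) := by
      rw [ae_iff]
      convert hNnull using 2
      ext x
      simp [Set.mem_inter_iff, mem_setOf_eq, not_not, and_assoc]
    filter_upwards [hN, hff'] with x hx hfx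
    by_cases h1 : h x = 1
    · simp [Set.indicator_of_mem, mem_setOf_eq, h1]
    · rw [Set.indicator_of_notMem (by simpa using h1)]
      by_cases h0 : h x = 0
      · simp [h0]
      · have : f' x = 0 := by
          by_contra hne
          exact hx ⟨⟨h0, h1⟩, hne⟩
        rw [hfx, this, mul_zero]
  refine ⟨key, part2, ?_⟩
  -- Part 3
  intro f hf
  constructor
  · rintro ⟨g, hg, hfg⟩
    have hfe : f =ᵐ[μ] ({x | h x = 1}).indicator g := hfg.trans (part2 g hg)
    refine measure_mono_null ?_ (ae_iff.mp hfe)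
    rintro x ⟨hfx, hhx⟩
    simp only [mem_setOf_eq] at hfx hhx ⊢
    intro heq
    rw [Set.indicator_of_notMem (by simpa using hhx)] at heq
    exact hfx heq
  · intro hμ0
    refine ⟨f, hf, ?_⟩
    refine Filter.EventuallyEq.trans ?_ (part2 f hf).symm
    have hae : ∀ᵐ x ∂μ, ¬(f x ≠ 0 ∧ h x ≠ 1) := by
      rw [ae_iff]
      convert hμ0 using 2
      ext x
      simp [Set.mem_inter_iff, mem_setOf_eq, not_not]
    filter_upwards [hae] with x hx
    by_cases h1 : h x = 1
    · simp [Set.indicator_of_mem, mem_setOf_eq, h1]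
    · rw [Set.indicator_of_notMem (by simpa using h1)]
      by_contra hne
      exact hx ⟨hne, h1⟩
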